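/- arXiv:1307.7387 — 2 statements merged into one kernel-verified Lean document; each statement's English description precedes it below -/
import Mathlib

section
/- Let κ be a regular uncountable cardinal, let U be a high-jump measure on P_κλ with clearance θ, and let λ' be a cardinal with θ ≤ λ' ≤ λ. Define U' on P_κλ' by: X ∈ U' if and only if {A ∈ P_κλ : A ∩ λ' ∈ X} ∈ U. Then U' is a high-jump measure on P_κλ', and the clearance of U' is again θ. -/
open Set

set_option autoImplicit false

/-- The order type of a set of ordinals, as an ordinal. -/
noncomputable def ot (A : Set Ordinal.{0}) : Ordinal.{0} :=
  sInf {o : Ordinal.{0} | Ordinal.lift.{1} o = Ordinal.type ((· < ·) : A → A → Prop)}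

/-- `Pset κ lam` is `P_κ λ`: the collection of subsets of `λ` of cardinality `< κ`. -/
def Pset (κ lam : Ordinal.{0}) : Set (Set Ordinal.{0}) :=
  {A | A ⊆ Set.Iio lam ∧ Cardinal.mk A < Cardinal.lift.{1} κ.card}

/-- `U` is a fine ultrafilter on `P_κ λ`. -/
def IsFine (κ lam : Ordinal.{0}) (U : Ultrafilter (Pset κ lam)) : Prop :=
  ∀ α < lam, {A : Pset κ lam | α ∈ (A : Set Ordinal)} ∈ U

/-- `U` is a normal ultrafilter on `P_κ λ`. -/
def IsNormalUF (κ lam : Ordinal.{0}) (U : Ultrafilter (Pset κ lam)) : Prop :=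
  ∀ g : Pset κ lam → Ordinal.{0},
    {A : Pset κ lam | g A ∈ (A : Set Ordinal)} ∈ U →
      ∃ γ, {A : Pset κ lam | g A = γ} ∈ U

/-- `U` is a normal fine ultrafilter on `P_κ λ`. -/
def IsNormalFine (κ lam : Ordinal.{0}) (U : Ultrafilter (Pset κ lam)) : Prop :=
  IsFine κ lam U ∧ IsNormalUF κ lam U

/-- `f` is (a code for) a function from `κ` to `κ`. -/
def KappaFun (κ : Ordinal.{0}) (f : Ordinal.{0} → Ordinal.{0}) : Prop := ∀ α < κ, f α < κ

/-- `U` is a high-jump measure on `P_κ λ`. -/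
def IsHighJumpMeasure (κ lam : Ordinal.{0}) (U : Ultrafilter (Pset κ lam)) : Prop :=
  IsNormalFine κ lam U ∧
    ∀ f, KappaFun κ f →
      {A : Pset κ lam | f (ot ((A : Set Ordinal) ∩ Set.Iio κ)) < ot (A : Set Ordinal)} ∈ U

/-- `θ` bounds the jump of every `f : κ → κ` with respect to `U`. -/
def ClearanceBound (κ lam : Ordinal.{0}) (U : Ultrafilter (Pset κ lam)) (θ : Ordinal.{0}) : Prop :=
  θ ≤ lam ∧ ∀ f, KappaFun κ f →
    {A : Pset κ lam |
      f (ot ((A : Set Ordinal) ∩ Set.Iio κ)) < ot ((A : Set Ordinal) ∩ Set.Iio θ)} ∈ U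

/-- `θ` is the clearance of the high-jump measure `U`. -/
def IsClearance (κ lam : Ordinal.{0}) (U : Ultrafilter (Pset κ lam)) (θ : Ordinal.{0}) : Prop :=
  ClearanceBound κ lam U θ ∧ ∀ θ', ClearanceBound κ lam U θ' → θ ≤ θ'

/-- An ordinal is a cardinal if it is the initial ordinal of its cardinality. -/
def IsCard (κ : Ordinal.{0}) : Prop := κ.card.ord = κ

/-- `κ` is a regular uncountable cardinal. -/
def RegUncountable (κ : Ordinal.{0}) : Prop :=
  IsCard κ ∧ κ.card.IsRegular ∧ Cardinal.aleph0 < κ.card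


instance instWOToType (o : Ordinal.{0}) : IsWellOrder o.ToType (· < ·) := isWellOrder_lt

lemma type_Iio (b : Ordinal.{0}) :
    Ordinal.type ((· < ·) : Set.Iio b → Set.Iio b → Prop) = Ordinal.lift.{1} b := by
  have h : Ordinal.lift.{0} (Ordinal.type ((· < ·) : Set.Iio b → Set.Iio b → Prop)) =
      Ordinal.lift.{1} (Ordinal.type ((· < ·) : b.ToType → b.ToType → Prop)) :=
    RelIso.ordinal_lift_type_eq (Ordinal.ToType.mk (o := b)).toRelIsoLT
  rw [Ordinal.type_toType] at h
  simpa using h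

def incl_emb {X Y : Set Ordinal.{0}} (h : X ⊆ Y) :
    ((· < ·) : X → X → Prop) ↪r ((· < ·) : Y → Y → Prop) :=
  ⟨⟨Set.inclusion h, Set.inclusion_injective h⟩, Iff.rfl⟩

lemma ot_lift {A : Set Ordinal.{0}} {b : Ordinal.{0}} (h : A ⊆ Set.Iio b) :
    Ordinal.lift.{1} (ot A) = Ordinal.type ((· < ·) : A → A → Prop) := by
  have hle : Ordinal.type ((· < ·) : A → A → Prop) ≤ Ordinal.lift.{1} b := by
    rw [← type_Iio b]
    exact Ordinal.type_le_iff'.2 ⟨incl_emb h⟩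
  obtain ⟨o, ho⟩ := Ordinal.mem_range_lift_of_le hle
  exact csInf_mem (⟨o, ho⟩ : Set.Nonempty {o' | Ordinal.lift.{1} o' = _})

lemma ot_mono {X Y : Set Ordinal.{0}} {b : Ordinal.{0}} (hY : Y ⊆ Set.Iio b) (hXY : X ⊆ Y) :
    ot X ≤ ot Y := by
  rw [← Ordinal.lift_le.{1}, ot_lift (hXY.trans hY), ot_lift hY]
  exact Ordinal.type_le_iff'.2 ⟨incl_emb hXY⟩

/-- If `U` is a high-jump measure on `P_κ λ` with clearance `θ`, and
`θ ≤ λ' ≤ λ` is a cardinal, then the projection `U'` of `U` to `P_κ λ'`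
(given by `X ∈ U' ↔ {A ∈ P_κ λ : A ∩ λ' ∈ X} ∈ U`) is a high-jump measure on `P_κ λ'`
with clearance again `θ`. -/
theorem statement0 (κ lam lam' θ : Ordinal.{0})
    (hκ : RegUncountable κ) (hκlam : κ ≤ lam)
    (U : Ultrafilter (Pset κ lam))
    (hU : IsHighJumpMeasure κ lam U) (hθ : IsClearance κ lam U θ)
    (hlam'card : IsCard lam') (hθlam' : θ ≤ lam') (hlam'lam : lam' ≤ lam)
    (U' : Ultrafilter (Pset κ lam'))
    (hU' : ∀ X : Set (Set Ordinal.{0}),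
      {A : Pset κ lam' | (A : Set Ordinal) ∈ X} ∈ U' ↔
        {A : Pset κ lam | (A : Set Ordinal) ∩ Set.Iio lam' ∈ X} ∈ U) :
    IsHighJumpMeasure κ lam' U' ∧ IsClearance κ lam' U' θ := by
  -- the projection map
  have hπmem : ∀ A : Pset κ lam, (A : Set Ordinal) ∩ Set.Iio lam' ∈ Pset κ lam' := by
    intro A
    exact ⟨Set.inter_subset_right,
      lt_of_le_of_lt (Cardinal.mk_le_mk_of_subset Set.inter_subset_left) A.2.2⟩
  set π : Pset κ lam → Pset κ lam' := fun A => ⟨(A : Set Ordinal) ∩ Set.Iio lam', hπmem A⟩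
    with hπ
  -- transfer principle
  have transfer : ∀ P : Pset κ lam' → Prop,
      ({A' : Pset κ lam' | P A'} ∈ U' ↔ {A : Pset κ lam | P (π A)} ∈ U) := by
    intro P
    have h := hU' {S | ∃ h : S ∈ Pset κ lam', P ⟨S, h⟩}
    have e1 : {A' : Pset κ lam' | (A' : Set Ordinal) ∈
        {S | ∃ h : S ∈ Pset κ lam', P ⟨S, h⟩}} = {A' : Pset κ lam' | P A'} := by
      ext A'
      simp only [Set.mem_setOf_eq]
      exact ⟨fun ⟨h, hP⟩ => by rwa [Subtype.coe_eta] at hP, fun hP => ⟨A'.2, by rwa [Subtype.coe_eta]⟩⟩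
    have e2 : {A : Pset κ lam | (A : Set Ordinal) ∩ Set.Iio lam' ∈
        {S | ∃ h : S ∈ Pset κ lam', P ⟨S, h⟩}} = {A : Pset κ lam | P (π A)} := by
      ext A
      simp only [Set.mem_setOf_eq]
      exact ⟨fun ⟨h, hP⟩ => hP, fun hP => ⟨hπmem A, hP⟩⟩
    rw [e1, e2] at h
    exact h
  -- bounds
  have hsub : ∀ A : Pset κ lam, (A : Set Ordinal) ⊆ Set.Iio lam := fun A => A.2.1
  -- κ < θ
  have hκθ : κ < θ := by
    by_contra h
    push_neg at h
    have hid : KappaFun κ (fun α => α) := fun α hα => hα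
    have hmem := hθ.1.2 _ hid
    obtain ⟨A, hA⟩ := Ultrafilter.nonempty_of_mem hmem
    have hle : ot ((A : Set Ordinal) ∩ Set.Iio θ) ≤ ot ((A : Set Ordinal) ∩ Set.Iio κ) :=
      ot_mono (fun x hx => hsub A hx.1)
        (Set.inter_subset_inter_right _ (Set.Iio_subset_Iio h))
    exact absurd (lt_of_lt_of_le hA hle) (lt_irrefl _)
  have hκlam' : κ ≤ lam' := hκθ.le.trans hθlam'
  -- intersection simplification
  have hinter : ∀ δ : Ordinal.{0}, δ ≤ lam' → ∀ A : Set Ordinal.{0},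
      A ∩ Set.Iio lam' ∩ Set.Iio δ = A ∩ Set.Iio δ := by
    intro δ hδ A
    ext α
    simp only [Set.mem_inter_iff, Set.mem_Iio]
    exact ⟨fun ⟨⟨h1, _⟩, h2⟩ => ⟨h1, h2⟩, fun ⟨h1, h2⟩ => ⟨⟨h1, lt_of_lt_of_le h2 hδ⟩, h2⟩⟩
  -- Fineness of U'
  have hFine : IsFine κ lam' U' := by
    intro α hα
    refine (transfer (fun A' => α ∈ (A' : Set Ordinal))).2 ?_
    have h1 := hU.1.1 α (lt_of_lt_of_le hα hlam'lam)
    exact Filter.mem_of_superset h1 (fun A hA => ⟨hA, hα⟩)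
  -- Normality of U'
  have hNorm : IsNormalUF κ lam' U' := by
    intro g hg
    have h1 := (transfer (fun A' => g A' ∈ (A' : Set Ordinal))).1 hg
    have h2 : {A : Pset κ lam | g (π A) ∈ (A : Set Ordinal)} ∈ U :=
      Filter.mem_of_superset h1 (fun A hA => hA.1)
    obtain ⟨γ, hγ⟩ := hU.1.2 (fun A => g (π A)) h2
    exact ⟨γ, (transfer (fun A' => g A' = γ)).2 hγ⟩
  -- High jump for U'
  have hHJ : ∀ f, KappaFun κ f →
      {A' : Pset κ lam' | f (ot ((A' : Set Ordinal) ∩ Set.Iio κ)) < ot (A' : Set Ordinal)} ∈ U' := by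
    intro f hf
    refine (transfer (fun A' => f (ot ((A' : Set Ordinal) ∩ Set.Iio κ)) < ot (A' : Set Ordinal))).2 ?_
    refine Filter.mem_of_superset (hθ.1.2 f hf) (fun A hA => ?_)
    show f (ot ((A : Set Ordinal) ∩ Set.Iio lam' ∩ Set.Iio κ)) <
      ot ((A : Set Ordinal) ∩ Set.Iio lam')
    rw [hinter κ hκlam']
    refine lt_of_lt_of_le hA (ot_mono (b := lam) (fun x hx => hsub A hx.1) ?_)
    exact Set.inter_subset_inter_right _ (Set.Iio_subset_Iio hθlam')
  -- Clearance bound for U'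
  have hCB : ClearanceBound κ lam' U' θ := by
    refine ⟨hθlam', fun f hf => ?_⟩
    refine (transfer (fun A' => f (ot ((A' : Set Ordinal) ∩ Set.Iio κ)) <
      ot ((A' : Set Ordinal) ∩ Set.Iio θ))).2 ?_
    refine Filter.mem_of_superset (hθ.1.2 f hf) (fun A hA => ?_)
    show f (ot ((A : Set Ordinal) ∩ Set.Iio lam' ∩ Set.Iio κ)) <
      ot ((A : Set Ordinal) ∩ Set.Iio lam' ∩ Set.Iio θ)
    rw [hinter κ hκlam', hinter θ hθlam']
    exact hA
  refine ⟨⟨⟨hFine, hNorm⟩, hHJ⟩, hCB, ?_⟩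
  -- minimality
  intro θ' hθ'
  refine hθ.2 θ' ⟨hθ'.1.trans hlam'lam, fun f hf => ?_⟩
  have h1 := (transfer (fun A' => f (ot ((A' : Set Ordinal) ∩ Set.Iio κ)) <
    ot ((A' : Set Ordinal) ∩ Set.Iio θ'))).1 (hθ'.2 f hf)
  refine Filter.mem_of_superset h1 (fun A hA => ?_)
  have hA' : f (ot ((A : Set Ordinal) ∩ Set.Iio lam' ∩ Set.Iio κ)) <
      ot ((A : Set Ordinal) ∩ Set.Iio lam' ∩ Set.Iio θ') := hA
  rwa [hinter κ hκlam', hinter θ' hθ'.1] at hA'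
end

section
/- A cardinal κ is Shelah for supercompactness if and only if for every function f : κ → κ there are a cardinal θ ≥ κ and a normal fine ultrafilter U on P_κθ such that {A ∈ P_κθ : f(ot(A ∩ κ)) ≤ ot(A)} ∈ U; that is, the apparently weaker 'almost-Shelah-for-supercompactness' condition with non-strict inequality is equivalent to being Shelah for supercompactness. -/
open Set

set_option autoImplicit false

/-- `κ` is Shelah for supercompactness: for every `f : κ → κ` there are a cardinal `θ ≥ κ`
and a normal fine ultrafilter `U` on `P_κ θ` with `{A | f(ot(A ∩ κ)) < ot A} ∈ U`. -/
def ShelahForSC (κ : Ordinal.{0}) : Prop :=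
  ∀ f, KappaFun κ f →
    ∃ θ, IsCard θ ∧ κ ≤ θ ∧ ∃ U : Ultrafilter (Pset κ θ), IsNormalFine κ θ U ∧
      {A : Pset κ θ | f (ot ((A : Set Ordinal) ∩ Set.Iio κ)) < ot (A : Set Ordinal)} ∈ U

/-- `κ` is Shelah for supercompactness iff it satisfies the apparently
weaker "almost Shelah for supercompactness" condition with non-strict inequality. -/
theorem statement14 (κ : Ordinal.{0}) (hκ : IsCard κ) :
    ShelahForSC κ ↔
      ∀ f, KappaFun κ f →
        ∃ θ, IsCard θ ∧ κ ≤ θ ∧ ∃ U : Ultrafilter (Pset κ θ), IsNormalFine κ θ U ∧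
          {A : Pset κ θ | f (ot ((A : Set Ordinal) ∩ Set.Iio κ)) ≤ ot (A : Set Ordinal)} ∈ U := by
  constructor
  · intro h f hf
    obtain ⟨θ, hθc, hκθ, U, hNF, hmem⟩ := h f hf
    exact ⟨θ, hθc, hκθ, U, hNF, Filter.mem_of_superset hmem fun A hA => by
        simp only [Set.mem_setOf_eq] at hA ⊢; exact hA.le⟩
  · intro h f hf
    rcases lt_or_ge κ.card Cardinal.aleph0 with hfin | hinf
    · -- κ finite: derive a contradiction from the hypothesis applied to the identity
      exfalso
      obtain ⟨n, hn⟩ := Cardinal.lt_aleph0.mp hfin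
      have hκn : κ = (n : Ordinal.{0}) := by
        rw [← hκ, hn, Cardinal.ord_nat]
      obtain ⟨θ, hθc, hκθ, U, ⟨hfine, _⟩, _⟩ := h id (fun α hα => hα)
      have hS : (⋂ i : Fin n, {A : Pset κ θ | (i : Ordinal.{0}) ∈ (A : Set Ordinal)}) ∈ U := by
        refine Filter.iInter_mem.mpr fun i => hfine _ ?_
        refine lt_of_lt_of_le ?_ hκθ
        rw [hκn]
        exact_mod_cast i.2
      obtain ⟨A, hA⟩ := Ultrafilter.nonempty_of_mem hS
      simp only [Set.mem_iInter, Set.mem_setOf_eq] at hA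
      have hinj : Function.Injective
          (fun i : ULift.{1} (Fin n) => (⟨(i.down : Ordinal.{0}), hA i.down⟩ : (A : Set Ordinal))) := by
        intro i j hij
        have : ((i.down : ℕ) : Ordinal.{0}) = ((j.down : ℕ) : Ordinal.{0}) :=
          congrArg Subtype.val hij
        have : (i.down : ℕ) = (j.down : ℕ) := by exact_mod_cast this
        cases i; cases j
        simp_all [Fin.ext_iff]
      have hle : (n : Cardinal.{1}) ≤ Cardinal.mk ((A : Set Ordinal) : Set Ordinal.{0}) := by
        have := Cardinal.mk_le_of_injective hinj
        rwa [Cardinal.mk_uLift, Cardinal.mk_fin, Cardinal.lift_natCast] at this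
      have hlt : Cardinal.mk ((A : Set Ordinal) : Set Ordinal.{0}) < (n : Cardinal.{1}) := by
        have := A.2.2
        rwa [hn, Cardinal.lift_natCast] at this
      exact absurd (lt_of_le_of_lt hle hlt) (lt_irrefl _)
    · -- κ infinite: apply the hypothesis to f + 1
      have hg : KappaFun κ (fun α => f α + 1) := by
        intro α hα
        have h1 : (f α).card < κ.card := by
          have hfα := hf α hα
          rw [← hκ] at hfα
          exact Cardinal.lt_ord.mp hfα
        have : (f α + 1).card < κ.card := by
          rw [Ordinal.add_one_eq_succ, Ordinal.card_succ]
          exact Cardinal.add_lt_of_lt hinf h1 (lt_of_lt_of_le Cardinal.one_lt_aleph0 hinf)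
        rw [← hκ]
        exact (Cardinal.lt_ord).mpr this
      obtain ⟨θ, hθc, hκθ, U, hNF, hmem⟩ := h _ hg
      refine ⟨θ, hθc, hκθ, U, hNF, Filter.mem_of_superset hmem fun A hA => ?_⟩
      simp only [Set.mem_setOf_eq] at hA ⊢
      exact lt_of_lt_of_le (Order.lt_add_one_iff.mpr le_rfl) hA
end
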